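/- Let k be a field and let f ∈ k[t_1,…,t_r, y_1,…,y_n] be a polynomial such that for each i ∈ {1,…,r}, the image of f in the quotient ring k[t_1,…,t_r,y_1,…,y_n]/(t_i) is a unit. Then there exist a nonzero constant c ∈ k and a polynomial g ∈ k[t_1,…,t_r,y_1,…,y_n] such that f = c − t_1 t_2 ⋯ t_r · g. -/

import Mathlib

open MvPolynomial

/-- Units of a multivariate polynomial ring (finitely many variables, `Fin m`)
over a field are nonzero constants. -/
lemma aux_isUnit_fin (k : Type*) [Field k] :
    ∀ (m : ℕ) (p : MvPolynomial (Fin m) k), IsUnit p →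
      ∃ c : k, c ≠ 0 ∧ p = C c := by
  intro m
  induction m with
  | zero =>
    intro p hp
    refine ⟨constantCoeff p, ?_, p.eq_C_of_isEmpty⟩
    have := hp.map (constantCoeff (σ := Fin 0) (R := k))
    exact this.ne_zero
  | succ m ih =>
    intro p hp
    have hp' : IsUnit (finSuccEquiv k m p) := hp.map _
    obtain ⟨q, hq, hqe⟩ := Polynomial.isUnit_iff.mp hp'
    obtain ⟨c, hc, rfl⟩ := ih q hq
    refine ⟨c, hc, ?_⟩
    have h2 := RingHom.congr_fun (finSuccEquiv_comp_C_eq_C (R := k) m) c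
    simp only [RingHom.coe_comp, Function.comp_apply] at h2
    apply_fun (finSuccEquiv k m).symm at hqe
    rw [AlgEquiv.symm_apply_apply] at hqe
    rw [← hqe]
    simpa using h2

/-- Units of `MvPolynomial (Fin r ⊕ Fin n) k` are nonzero constants. -/
lemma aux_isUnit (k : Type*) [Field k] (r n : ℕ)
    (p : MvPolynomial (Fin r ⊕ Fin n) k) (hp : IsUnit p) :
    ∃ c : k, c ≠ 0 ∧ p = C c := by
  have hp' : IsUnit (renameEquiv k finSumFinEquiv p) := hp.map _
  obtain ⟨c, hc, hce⟩ := aux_isUnit_fin k (r + n) _ hp'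
  refine ⟨c, hc, (renameEquiv k finSumFinEquiv).injective ?_⟩
  rw [hce]
  simp

/-- Each variable `X i` is prime in a multivariate polynomial ring over a domain. -/
lemma aux_prime_X {R : Type*} [CommRing R] [IsDomain R] {σ : Type*} (i : σ) :
    Prime (X i : MvPolynomial σ R) := by
  classical
  let e : MvPolynomial σ R ≃ₐ[R] Polynomial (MvPolynomial {j : σ // j ≠ i} R) :=
    (renameEquiv R (Equiv.optionSubtypeNe i).symm).trans
      (optionEquivLeft R {j : σ // j ≠ i})
  have he : e (X i) = Polynomial.X := by
    simp only [e, AlgEquiv.trans_apply, renameEquiv_apply, rename_X]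
    rw [Equiv.optionSubtypeNe_symm_self, optionEquivLeft_X_none]
  rw [← MulEquiv.prime_iff e]
  show Prime (e (X i))
  rw [he]
  exact Polynomial.prime_X

theorem stmt_1 (k : Type*) [Field k] (r n : ℕ)
    (f : MvPolynomial (Fin r ⊕ Fin n) k)
    (hf : ∀ i : Fin r,
      IsUnit (Ideal.Quotient.mk (Ideal.span {(X (Sum.inl i) : MvPolynomial (Fin r ⊕ Fin n) k)}) f)) :
    ∃ (c : k) (g : MvPolynomial (Fin r ⊕ Fin n) k), c ≠ 0 ∧
      f = C c - (∏ i : Fin r, X (Sum.inl i)) * g := by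
  classical
  rcases Nat.eq_zero_or_pos r with hr | hr
  · subst hr
    exact ⟨1, C 1 - f, one_ne_zero, by simp⟩
  set c : k := constantCoeff f with hcdef
  -- Step 1: for each i, X i divides f - C c, and c ≠ 0.
  have key : ∀ i : Fin r, (X (Sum.inl i) : MvPolynomial (Fin r ⊕ Fin n) k) ∣ f - C c ∧ c ≠ 0 := by
    intro i
    set I : Ideal (MvPolynomial (Fin r ⊕ Fin n) k) :=
      Ideal.span {(X (Sum.inl i) : MvPolynomial (Fin r ⊕ Fin n) k)} with hI
    -- the substitution sending X (inl i) to 0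
    set φ : MvPolynomial (Fin r ⊕ Fin n) k →ₐ[k] MvPolynomial (Fin r ⊕ Fin n) k :=
      aeval (fun j => if j = Sum.inl i then 0 else X j) with hφ
    have hφX : φ (X (Sum.inl i)) = 0 := by simp [hφ]
    have hker : ∀ a ∈ I, (φ : MvPolynomial (Fin r ⊕ Fin n) k →+* MvPolynomial (Fin r ⊕ Fin n) k) a = 0 := by
      intro a ha
      rw [hI, Ideal.mem_span_singleton] at ha
      obtain ⟨b, rfl⟩ := ha
      simp [hφX]
    -- φ f is a unit
    have hunit : IsUnit (φ f) := by
      have := (hf i).map (Ideal.Quotient.lift I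
        (φ : MvPolynomial (Fin r ⊕ Fin n) k →+* MvPolynomial (Fin r ⊕ Fin n) k) hker)
      rwa [Ideal.Quotient.lift_mk] at this
    obtain ⟨c', hc', hφf⟩ := aux_isUnit k r n (φ f) hunit
    -- f ≡ φ f mod I
    have hmod : Ideal.Quotient.mk I (φ f) = Ideal.Quotient.mk I f := by
      have : (Ideal.Quotient.mk I).comp
            (φ : MvPolynomial (Fin r ⊕ Fin n) k →+* MvPolynomial (Fin r ⊕ Fin n) k)
          = Ideal.Quotient.mk I := by
        apply MvPolynomial.ringHom_ext
        · intro a; simp [hφ]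
        · intro j
          by_cases hj : j = Sum.inl i
          · subst hj
            simp only [RingHom.coe_comp, Function.comp_apply]
            rw [show ((φ : MvPolynomial (Fin r ⊕ Fin n) k →+* MvPolynomial (Fin r ⊕ Fin n) k)
                (X (Sum.inl i))) = 0 from hφX, map_zero, eq_comm,
              Ideal.Quotient.eq_zero_iff_mem, hI]
            exact Ideal.subset_span rfl
          · simp [hφ, hj]
      exact RingHom.congr_fun this f
    -- c' = c
    have hcc : c' = c := by
      have h1 : constantCoeff (φ f) = constantCoeff f := by
        have : (constantCoeff (σ := Fin r ⊕ Fin n) (R := k)).comp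
              (φ : MvPolynomial (Fin r ⊕ Fin n) k →+* MvPolynomial (Fin r ⊕ Fin n) k)
            = constantCoeff := by
          apply MvPolynomial.ringHom_ext
          · intro a; simp [hφ]
          · intro j
            by_cases hj : j = Sum.inl i <;> simp [hφ, hj]
        exact RingHom.congr_fun this f
      rw [hφf] at h1
      simpa [hcdef] using h1
    subst hcc
    constructor
    · have hz : Ideal.Quotient.mk I (f - C c) = 0 := by
        rw [RingHom.map_sub, ← hmod, hφf, sub_self]
      rw [← Ideal.mem_span_singleton, ← hI, ← Ideal.Quotient.eq_zero_iff_mem]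
      exact hz
    · exact hc'
  have hc0 : c ≠ 0 := (key ⟨0, hr⟩).2
  -- Step 2: the product divides f - C c
  have hprod : (∏ i : Fin r, (X (Sum.inl i) : MvPolynomial (Fin r ⊕ Fin n) k)) ∣ f - C c := by
    have : ∀ s : Finset (Fin r),
        (∏ i ∈ s, (X (Sum.inl i) : MvPolynomial (Fin r ⊕ Fin n) k)) ∣ f - C c := by
      intro s
      refine Finset.induction_on s (by simp) ?_
      intro a s' hns ih
      · rw [Finset.prod_insert hns]
        obtain ⟨g, hg⟩ := ih
        have ha : (X (Sum.inl a) : MvPolynomial (Fin r ⊕ Fin n) k) ∣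
            (∏ i ∈ s', X (Sum.inl i)) * g := hg ▸ (key a).1
        have hXa := aux_prime_X (R := k) (Sum.inl a : Fin r ⊕ Fin n)
        have hnd : ¬ (X (Sum.inl a) : MvPolynomial (Fin r ⊕ Fin n) k) ∣
            ∏ i ∈ s', X (Sum.inl i) := by
          intro hd
          obtain ⟨j, hjs, hdj⟩ := hXa.exists_mem_finset_dvd hd
          rw [MvPolynomial.X_dvd_X] at hdj
          have : a = j := by
            injection hdj
          exact hns (this ▸ hjs)
        have hdg : (X (Sum.inl a) : MvPolynomial (Fin r ⊕ Fin n) k) ∣ g :=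
          (hXa.dvd_mul.mp ha).resolve_left hnd
        obtain ⟨g', rfl⟩ := hdg
        exact ⟨g', by rw [hg]; ring⟩
    exact this Finset.univ
  obtain ⟨g, hg⟩ := hprod
  exact ⟨c, -g, hc0, by rw [mul_neg, sub_neg_eq_add, ← hg]; ring⟩
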